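/- arXiv:1511.02021 — 6 statements merged into one kernel-verified Lean document; each statement's English description precedes it below -/
import Mathlib

section
/- Let V be a Hilbert space, a : V × V → ℝ a continuous bilinear form satisfying a(v,v) ≥ C‖v‖² for all v with C > 0, and f ∈ V'. If u ∈ V satisfies a(u,v) = f(v) for all v ∈ V, and V_N ⊆ V is a closed subspace with u_N ∈ V_N satisfying a(u_N, v) = f(v) for all v ∈ V_N, then ‖u - u_N‖ ≤ (‖a‖ / C) · inf_{v ∈ V_N} ‖u - v‖ (Céa's Lemma). -/
/-- Céa's Lemma for coercive continuous bilinear forms on a Hilbert space. -/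
theorem cea_lemma {V : Type*} [NormedAddCommGroup V] [InnerProductSpace ℝ V] [CompleteSpace V]
    (a : V →L[ℝ] V →L[ℝ] ℝ) (C : ℝ) (hC : 0 < C)
    (hcoer : ∀ v : V, C * ‖v‖ ^ 2 ≤ a v v)
    (f : V →L[ℝ] ℝ) (u : V) (hu : ∀ v : V, a u v = f v)
    (VN : Submodule ℝ V) (hVN : IsClosed (VN : Set V))
    (uN : V) (huN : uN ∈ VN) (huNsol : ∀ v ∈ VN, a uN v = f v) :
    ‖u - uN‖ ≤ (‖a‖ / C) * Metric.infDist u (VN : Set V) := by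
  by_cases h : u = uN
  · simp only [h, sub_self, norm_zero]
    exact mul_nonneg (div_nonneg (norm_nonneg a) hC.le) (Metric.infDist_nonneg)
  set e := u - uN with he
  have he0 : 0 < ‖e‖ := by
    rw [norm_pos_iff]
    exact sub_ne_zero_of_ne h
  -- Galerkin orthogonality
  have horth : ∀ v ∈ VN, a e v = 0 := by
    intro v hv
    simp only [he, map_sub, ContinuousLinearMap.sub_apply, hu v, huNsol v hv, sub_self]
  have ha0 : 0 < ‖a‖ := by
    have h1 := hcoer e
    have h2 : a e e ≤ ‖a‖ * ‖e‖ * ‖e‖ := (le_abs_self _).trans (a.le_opNorm₂ e e)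
    nlinarith [mul_pos (mul_pos hC he0) he0]
  -- key bound
  have key : ∀ v ∈ VN, C * ‖e‖ ≤ ‖a‖ * dist u v := by
    intro v hv
    have h1 : a e e = a e (u - v) := by
      have h9 : a e (u - v) = a e e - a e (v - uN) := by
        rw [← map_sub]
        congr 1
        rw [he]
        abel
      rw [h9, horth (v - uN) (VN.sub_mem hv huN), sub_zero]
    have h2 : a e (u - v) ≤ ‖a‖ * ‖e‖ * ‖u - v‖ :=
      (le_abs_self _).trans (a.le_opNorm₂ e (u - v))
    have h3 := hcoer e
    have h4 : C * ‖e‖ ^ 2 ≤ ‖a‖ * ‖e‖ * ‖u - v‖ := by rw [h1] at h3; linarith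
    rw [dist_eq_norm]
    nlinarith
  have hinf : C * ‖e‖ / ‖a‖ ≤ Metric.infDist u (VN : Set V) := by
    by_contra hlt
    push_neg at hlt
    obtain ⟨v, hv, hdv⟩ := (Metric.infDist_lt_iff ⟨uN, huN⟩).1 hlt
    have := key v hv
    have h5 : ‖a‖ * dist u v < ‖a‖ * (C * ‖e‖ / ‖a‖) := by
      exact mul_lt_mul_of_pos_left hdv ha0
    rw [mul_div_cancel₀ _ ha0.ne'] at h5
    linarith
  rw [div_le_iff₀ ha0] at hinf
  rw [div_mul_eq_mul_div, le_div_iff₀ hC]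
  nlinarith
end

section
/- In ℝ^{2N} with the Euclidean norm, the Kolmogorov N-width of the ℓ¹ unit ball B₁ = {x ∈ ℝ^{2N} : ‖x‖₁ ≤ 1} satisfies d_N(B₁) = ((2N - N)/(2N))^{1/2} = 1/√2. -/
open Metric Finset Module Submodule

noncomputable section

/-- The Kolmogorov N-width of a subset `M` of a normed space. -/
noncomputable def kolmogorovWidth (V : Type*) [NormedAddCommGroup V] [NormedSpace ℝ V]
    (N : ℕ) (M : Set V) : ℝ :=
  ⨅ W : {W : Submodule ℝ V // FiniteDimensional ℝ W ∧ Module.finrank ℝ W ≤ N},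
    ⨆ v : M, Metric.infDist (v : V) ((W : Submodule ℝ V) : Set V)

section Aux

variable {n : ℕ}

lemma sum_sq_eq_norm_sq (x : EuclideanSpace ℝ (Fin n)) : ∑ i, (x i) ^ 2 = ‖x‖ ^ 2 := by
  rw [EuclideanSpace.norm_eq, Real.sq_sqrt (by positivity)]
  simp [sq_abs]

lemma sum_proj_single_sq (W : Submodule ℝ (EuclideanSpace ℝ (Fin n)))
    [FiniteDimensional ℝ W] :
    ∑ i, ‖(orthogonalProjection W (EuclideanSpace.single i 1) :
        EuclideanSpace ℝ (Fin n))‖ ^ 2 = finrank ℝ W := by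
  set E := EuclideanSpace ℝ (Fin n)
  let f := stdOrthonormalBasis ℝ W
  have h1 : ∀ v : E, ‖(orthogonalProjection W v : E)‖ ^ 2
      = ∑ j, (inner ℝ ((f j : E)) v : ℝ) ^ 2 := by
    intro v
    have h := f.sum_inner_mul_inner (orthogonalProjection W v) (orthogonalProjection W v)
    rw [real_inner_self_eq_norm_sq] at h
    rw [← Submodule.coe_norm, ← h]
    refine Finset.sum_congr rfl fun j _ => ?_
    have key := inner_orthogonalProjection_eq_of_mem_left (K := W) (f j) v
    rw [← key, real_inner_comm ((orthogonalProjection W) v) (f j)]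
    ring
  calc ∑ i, ‖(orthogonalProjection W (EuclideanSpace.single i 1) : E)‖ ^ 2
      = ∑ i, ∑ j, (inner ℝ ((f j : E)) (EuclideanSpace.single i (1:ℝ)) : ℝ) ^ 2 := by
        simp_rw [h1]
    _ = ∑ j, ∑ i, ((f j : E) i) ^ 2 := by
        rw [Finset.sum_comm]
        simp [EuclideanSpace.inner_single_right]
    _ = ∑ j : Fin (finrank ℝ W), (1 : ℝ) := by
        refine Finset.sum_congr rfl fun j _ => ?_
        rw [sum_sq_eq_norm_sq]
        have : ‖f j‖ = 1 := f.orthonormal.1 j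
        rw [Submodule.coe_norm] at this
        simp [this]
    _ = finrank ℝ W := by simp

lemma infDist_eq_norm_sub_proj (W : Submodule ℝ (EuclideanSpace ℝ (Fin n)))
    [FiniteDimensional ℝ W] (v : EuclideanSpace ℝ (Fin n)) :
    infDist v (W : Set (EuclideanSpace ℝ (Fin n)))
      = ‖v - orthogonalProjection W v‖ := by
  rw [Metric.infDist_eq_iInf, ← Submodule.starProjection_apply, Submodule.starProjection_minimal]
  congr 1

lemma exists_far {N : ℕ} (hN : 0 < N) (W : Submodule ℝ (EuclideanSpace ℝ (Fin (2 * N))))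
    [FiniteDimensional ℝ W] (hW : finrank ℝ W ≤ N) :
    ∃ i : Fin (2 * N), Real.sqrt (1 / 2)
      ≤ infDist (EuclideanSpace.single i 1) (W : Set (EuclideanSpace ℝ (Fin (2 * N)))) := by
  have hpyth : ∀ i : Fin (2 * N),
      ‖(EuclideanSpace.single i 1 : EuclideanSpace ℝ (Fin (2 * N))) - ((orthogonalProjection W (EuclideanSpace.single i 1)) : EuclideanSpace ℝ (Fin (2 * N)))‖ ^ 2
        = 1 - ‖((orthogonalProjection W (EuclideanSpace.single i (1:ℝ))) : EuclideanSpace ℝ (Fin (2 * N)))‖ ^ 2 := by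
    intro i
    have h := norm_sq_eq_add_norm_sq_projection (EuclideanSpace.single i (1:ℝ)) W
    have hval : ((orthogonalProjection Wᗮ (EuclideanSpace.single i (1:ℝ))) : EuclideanSpace ℝ (Fin (2 * N)))
        = EuclideanSpace.single i (1:ℝ) - ((orthogonalProjection W (EuclideanSpace.single i (1:ℝ))) : EuclideanSpace ℝ (Fin (2 * N))) :=
      by simp only [← Submodule.starProjection_apply]; exact Submodule.starProjection_orthogonal_val _
    rw [EuclideanSpace.norm_single] at h
    rw [Submodule.coe_norm, Submodule.coe_norm, hval] at h
    rw [norm_one] at h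
    linarith [h]
  have hsum : (N : ℝ) ≤ ∑ i : Fin (2 * N),
      ‖(EuclideanSpace.single i 1 : EuclideanSpace ℝ (Fin (2 * N)))
        - ((orthogonalProjection W (EuclideanSpace.single i 1)) : EuclideanSpace ℝ (Fin (2 * N)))‖ ^ 2 := by
    have heq : ∑ i : Fin (2 * N),
        ‖(EuclideanSpace.single i 1 : EuclideanSpace ℝ (Fin (2 * N)))
          - ((orthogonalProjection W (EuclideanSpace.single i 1)) : EuclideanSpace ℝ (Fin (2 * N)))‖ ^ 2
        = (2 * N : ℕ) - (finrank ℝ W : ℝ) := by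
      simp_rw [hpyth]
      rw [Finset.sum_sub_distrib, sum_proj_single_sq]
      simp
    rw [heq]
    have h1 : (finrank ℝ W : ℝ) ≤ N := by exact_mod_cast hW
    push_cast
    linarith
  have hne : (Finset.univ : Finset (Fin (2 * N))).Nonempty :=
    ⟨⟨0, by omega⟩, Finset.mem_univ _⟩
  have hconst : ∑ _i : Fin (2 * N), (1 / 2 : ℝ) ≤ ∑ i : Fin (2 * N),
      ‖(EuclideanSpace.single i 1 : EuclideanSpace ℝ (Fin (2 * N)))
        - ((orthogonalProjection W (EuclideanSpace.single i 1)) : EuclideanSpace ℝ (Fin (2 * N)))‖ ^ 2 := by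
    rw [Finset.sum_const]
    simp only [Finset.card_univ, Fintype.card_fin, nsmul_eq_mul]
    have h2 : ((2 * N : ℕ) : ℝ) * (1 / 2) = N := by push_cast; ring
    rw [h2]
    exact hsum
  obtain ⟨i, _, hi⟩ := Finset.exists_le_of_sum_le hne hconst
  refine ⟨i, ?_⟩
  rw [infDist_eq_norm_sub_proj]
  calc Real.sqrt (1 / 2) ≤ Real.sqrt (‖(EuclideanSpace.single i 1 : EuclideanSpace ℝ (Fin (2 * N)))
        - orthogonalProjection W (EuclideanSpace.single i 1)‖ ^ 2) := Real.sqrt_le_sqrt hi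
    _ = _ := Real.sqrt_sq (norm_nonneg _)

end Aux

section Upper

variable {N : ℕ}

/-- Pairing of indices. -/
def pe (N : ℕ) : Fin 2 × Fin N ≃ Fin (2 * N) := finProdFinEquiv

/-- Generators of the approximating subspace. -/
noncomputable def gvec (N : ℕ) (j : Fin N) : EuclideanSpace ℝ (Fin (2 * N)) :=
  EuclideanSpace.single (pe N (0, j)) 1 + EuclideanSpace.single (pe N (1, j)) 1

lemma wsum_apply (c : Fin N → ℝ) (a : Fin 2) (b : Fin N) :
    (∑ j, c j • gvec N j) (pe N (a, b)) = c b := by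
  have h : (∑ j, c j • gvec N j) (pe N (a, b))
      = EuclideanSpace.proj (𝕜 := ℝ) (pe N (a, b)) (∑ j, c j • gvec N j) := rfl
  rw [h, map_sum]
  have hterm : ∀ j : Fin N,
      EuclideanSpace.proj (𝕜 := ℝ) (pe N (a, b)) (c j • gvec N j)
        = if b = j then c j else 0 := by
    intro j
    rw [map_smul]
    have hval : EuclideanSpace.proj (𝕜 := ℝ) (pe N (a, b)) (gvec N j)
        = (gvec N j) (pe N (a, b)) := rfl
    rw [hval, gvec]
    simp only [PiLp.add_apply, EuclideanSpace.single_apply, (pe N).injective.eq_iff,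
      Prod.mk.injEq, smul_eq_mul]
    have ha : a = 0 ∨ a = 1 := by fin_cases a <;> simp
    rcases ha with rfl | rfl <;> by_cases hbj : b = j <;>
      simp [hbj, Fin.ext_iff]
  rw [Finset.sum_congr rfl fun j _ => hterm j]
  simp

lemma key_upper (x : EuclideanSpace ℝ (Fin (2 * N))) (hx : ∑ i, |x i| ≤ 1) :
    ‖x - ∑ j, ((x (pe N (0, j)) + x (pe N (1, j))) / 2) • gvec N j‖ ≤ Real.sqrt (1 / 2) := by
  set c : Fin N → ℝ := fun j => (x (pe N (0, j)) + x (pe N (1, j))) / 2 with hc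
  set w : EuclideanSpace ℝ (Fin (2 * N)) := ∑ j, c j • gvec N j with hw
  have hxw : ‖x - w‖ ^ 2 ≤ 1 / 2 := by
    rw [← sum_sq_eq_norm_sq]
    have happ : ∀ i, (x - w) i = x i - w i := fun i => rfl
    simp_rw [happ]
    have hre : ∑ i, (x i - w i) ^ 2
        = ∑ p : Fin 2 × Fin N, (x (pe N p) - w (pe N p)) ^ 2 :=
      (Equiv.sum_comp (pe N) fun i => (x i - w i) ^ 2).symm
    rw [hre, Fintype.sum_prod_type, Fin.sum_univ_two, ← Finset.sum_add_distrib]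
    have hpair : ∀ b : Fin N,
        (x (pe N (0, b)) - w (pe N (0, b))) ^ 2 + (x (pe N (1, b)) - w (pe N (1, b))) ^ 2
          ≤ (|x (pe N (0, b))| + |x (pe N (1, b))|) ^ 2 / 2 := by
      intro b
      rw [hw, wsum_apply c 0 b, wsum_apply c 1 b, hc]
      set A := x (pe N (0, b)); set B := x (pe N (1, b))
      have h1 : (A - (A + B) / 2) ^ 2 + (B - (A + B) / 2) ^ 2 = (A - B) ^ 2 / 2 := by ring
      rw [h1]
      have h2 : (A - B) ^ 2 ≤ (|A| + |B|) ^ 2 := by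
        rw [← sq_abs (A - B)]
        exact pow_le_pow_left₀ (abs_nonneg _) (abs_sub _ _) 2
      linarith
    calc ∑ b, ((x (pe N (0, b)) - w (pe N (0, b))) ^ 2
            + (x (pe N (1, b)) - w (pe N (1, b))) ^ 2)
        ≤ ∑ b, (|x (pe N (0, b))| + |x (pe N (1, b))|) ^ 2 / 2 :=
          Finset.sum_le_sum fun b _ => hpair b
      _ = (∑ b, (|x (pe N (0, b))| + |x (pe N (1, b))|) ^ 2) / 2 := by
          rw [Finset.sum_div]
      _ ≤ (∑ b, (|x (pe N (0, b))| + |x (pe N (1, b))|)) ^ 2 / 2 := by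
          have := Finset.sum_sq_le_sq_sum_of_nonneg
            (s := Finset.univ) (f := fun b : Fin N => |x (pe N (0, b))| + |x (pe N (1, b))|)
            (fun b _ => by positivity)
          linarith
      _ ≤ 1 / 2 := by
          have hsum1 : ∑ b, (|x (pe N (0, b))| + |x (pe N (1, b))|) = ∑ i, |x i| := by
            rw [← Equiv.sum_comp (pe N) fun i => |x i|, Fintype.sum_prod_type,
              Fin.sum_univ_two, ← Finset.sum_add_distrib]
          have h1 : (0:ℝ) ≤ ∑ b, (|x (pe N (0, b))| + |x (pe N (1, b))|) :=
            Finset.sum_nonneg fun b _ => by positivity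
          rw [hsum1] at h1 ⊢
          nlinarith [hx]
  rw [← Real.sqrt_sq (norm_nonneg (x - w))]
  exact Real.sqrt_le_sqrt hxw

end Upper

section Generic

variable {V : Type*} [NormedAddCommGroup V] [NormedSpace ℝ V] {N : ℕ} {M : Set V}

instance kwNonempty : Nonempty {W : Submodule ℝ V //
    FiniteDimensional ℝ W ∧ finrank ℝ W ≤ N} :=
  ⟨⟨⊥, inferInstance, by simp⟩⟩

lemma kolmogorovWidth_le (W : Submodule ℝ V) [hfd : FiniteDimensional ℝ W]
    (h : finrank ℝ W ≤ N) :
    kolmogorovWidth V N M ≤ ⨆ v : M, infDist (v : V) (W : Set V) := by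
  have hb : BddBelow (Set.range fun W : {W : Submodule ℝ V //
      FiniteDimensional ℝ W ∧ finrank ℝ W ≤ N} =>
      ⨆ v : M, infDist (v : V) ((W : Submodule ℝ V) : Set V)) := by
    refine ⟨0, ?_⟩
    rintro r ⟨U, rfl⟩
    exact Real.iSup_nonneg fun v => infDist_nonneg
  exact ciInf_le hb ⟨W, hfd, h⟩

lemma le_kolmogorovWidth {r : ℝ}
    (h : ∀ (W : Submodule ℝ V) (_ : FiniteDimensional ℝ W), finrank ℝ W ≤ N →
      r ≤ ⨆ v : M, infDist (v : V) (W : Set V)) :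
    r ≤ kolmogorovWidth V N M :=
  le_ciInf fun W => h W.1 W.2.1 W.2.2

end Generic

set_option maxHeartbeats 1000000 in
/-- In `ℝ^{2N}` with the Euclidean norm, the Kolmogorov N-width of the ℓ¹ unit ball
equals `√(N/(2N)) = 1/√2`. -/
theorem kolmogorovWidth_l1_ball (N : ℕ) (hN : 0 < N) :
    kolmogorovWidth (EuclideanSpace ℝ (Fin (2 * N))) N
        {x : EuclideanSpace ℝ (Fin (2 * N)) | ∑ i, |x i| ≤ 1}
      = Real.sqrt (((2 * N : ℝ) - N) / (2 * N)) ∧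
    Real.sqrt (((2 * N : ℝ) - N) / (2 * N)) = 1 / Real.sqrt 2 := by
  have hNR : (0 : ℝ) < N := by exact_mod_cast hN
  have harith : ((2 * N : ℝ) - N) / (2 * N) = 1 / 2 := by
    field_simp
    ring
  have hsqrt2 : Real.sqrt (1 / 2) = 1 / Real.sqrt 2 := by
    rw [one_div, one_div, ← Real.sqrt_inv]
  rw [harith]
  refine ⟨?_, hsqrt2⟩
  have h0M : (0 : EuclideanSpace ℝ (Fin (2 * N)))
      ∈ {x : EuclideanSpace ℝ (Fin (2 * N)) | ∑ i, |x i| ≤ 1} := by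
    have hz : ∀ i : Fin (2 * N), (0 : EuclideanSpace ℝ (Fin (2 * N))) i = 0 := fun _ => rfl
    simp [hz]
  haveI : Nonempty {x : EuclideanSpace ℝ (Fin (2 * N)) | ∑ i, |x i| ≤ 1} := ⟨⟨0, h0M⟩⟩
  -- norms of elements of M are at most 1
  have hnorm_le : ∀ x : EuclideanSpace ℝ (Fin (2 * N)), (∑ i, |x i|) ≤ 1 → ‖x‖ ≤ 1 := by
    intro x hx'
    have h1 : ‖x‖ ^ 2 ≤ 1 := by
      rw [← sum_sq_eq_norm_sq]
      calc ∑ i, (x i) ^ 2 = ∑ i, |x i| ^ 2 := by simp [sq_abs]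
        _ ≤ (∑ i, |x i|) ^ 2 :=
            Finset.sum_sq_le_sq_sum_of_nonneg fun i _ => abs_nonneg _
        _ ≤ 1 := by
            nlinarith [hx', Finset.sum_nonneg (fun i (_ : i ∈ Finset.univ) => abs_nonneg (x i))]
    nlinarith [norm_nonneg x]
  have hbdd : ∀ W : Submodule ℝ (EuclideanSpace ℝ (Fin (2 * N))),
      BddAbove (Set.range fun v : {x : EuclideanSpace ℝ (Fin (2 * N)) | ∑ i, |x i| ≤ 1} =>
        infDist (v : EuclideanSpace ℝ (Fin (2 * N))) (W : Set (EuclideanSpace ℝ (Fin (2 * N))))) := by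
    intro W
    refine ⟨1, ?_⟩
    rintro r ⟨v, rfl⟩
    calc infDist (v : EuclideanSpace ℝ (Fin (2 * N))) (W : Set (EuclideanSpace ℝ (Fin (2 * N))))
          ≤ dist (v : EuclideanSpace ℝ (Fin (2 * N))) 0 :=
          infDist_le_dist_of_mem (Submodule.zero_mem W)
      _ = ‖(v : EuclideanSpace ℝ (Fin (2 * N)))‖ := by rw [dist_zero_right]
      _ ≤ 1 := hnorm_le _ v.2
  apply le_antisymm
  · -- upper bound: use the pair subspace
    set W₀ : Submodule ℝ (EuclideanSpace ℝ (Fin (2 * N))) :=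
      Submodule.span ℝ (Set.range (gvec N)) with hW₀
    haveI : FiniteDimensional ℝ W₀ := inferInstance
    have hrank : finrank ℝ W₀ ≤ N := by
      have := finrank_range_le_card (R := ℝ) (gvec N)
      simpa [Set.finrank] using this
    have hW₀le : (⨆ v : {x : EuclideanSpace ℝ (Fin (2 * N)) | ∑ i, |x i| ≤ 1},
        infDist (v : EuclideanSpace ℝ (Fin (2 * N)))
          (W₀ : Set (EuclideanSpace ℝ (Fin (2 * N))))) ≤ Real.sqrt (1 / 2) := by
      refine ciSup_le fun v => ?_
      set x : EuclideanSpace ℝ (Fin (2 * N)) := (v : EuclideanSpace ℝ (Fin (2 * N))) with hxdef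
      have hx : ∑ i, |x i| ≤ 1 := v.2
      set w : EuclideanSpace ℝ (Fin (2 * N)) :=
        ∑ j, ((x (pe N (0, j)) + x (pe N (1, j))) / 2) • gvec N j with hwdef
      have hwmem : w ∈ W₀ := Submodule.sum_mem _ fun j _ =>
        Submodule.smul_mem _ _ (Submodule.subset_span ⟨j, rfl⟩)
      calc infDist x (W₀ : Set (EuclideanSpace ℝ (Fin (2 * N))))
          ≤ dist x w := infDist_le_dist_of_mem hwmem
        _ = ‖x - w‖ := dist_eq_norm _ _
        _ ≤ Real.sqrt (1 / 2) := key_upper x hx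
    calc kolmogorovWidth (EuclideanSpace ℝ (Fin (2 * N))) N
          {x : EuclideanSpace ℝ (Fin (2 * N)) | ∑ i, |x i| ≤ 1}
        ≤ ⨆ v : {x : EuclideanSpace ℝ (Fin (2 * N)) | ∑ i, |x i| ≤ 1},
            infDist (v : EuclideanSpace ℝ (Fin (2 * N)))
              (W₀ : Set (EuclideanSpace ℝ (Fin (2 * N)))) :=
          kolmogorovWidth_le W₀ hrank
      _ ≤ Real.sqrt (1 / 2) := hW₀le
  · -- lower bound
    refine le_kolmogorovWidth fun Wsub hfd hrank => ?_
    haveI := hfd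
    obtain ⟨i, hi⟩ := exists_far hN Wsub hrank
    have hmem : (EuclideanSpace.single i (1:ℝ) : EuclideanSpace ℝ (Fin (2 * N)))
        ∈ {x : EuclideanSpace ℝ (Fin (2 * N)) | ∑ i, |x i| ≤ 1} := by
      simp only [Set.mem_setOf_eq]
      have hval : ∀ k : Fin (2 * N), |(EuclideanSpace.single i (1:ℝ)) k|
          = if k = i then 1 else 0 := by
        intro k; rw [EuclideanSpace.single_apply]; split <;> simp
      rw [Finset.sum_congr rfl fun k _ => hval k]
      simp
    calc Real.sqrt (1 / 2)
        ≤ infDist (EuclideanSpace.single i 1 : EuclideanSpace ℝ (Fin (2 * N)))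
            (Wsub : Set (EuclideanSpace ℝ (Fin (2 * N)))) := hi
      _ ≤ ⨆ v : {x : EuclideanSpace ℝ (Fin (2 * N)) | ∑ i, |x i| ≤ 1},
            infDist (v : EuclideanSpace ℝ (Fin (2 * N)))
              (Wsub : Set (EuclideanSpace ℝ (Fin (2 * N)))) :=
          le_ciSup (hbdd Wsub) ⟨EuclideanSpace.single i 1, hmem⟩
end
end

section
/- If e₁, ..., e_{2N} are pairwise orthogonal unit vectors in a Hilbert space V, then any linear subspace W ⊆ V with dim W ≤ N satisfies sup_{1 ≤ n ≤ 2N} dist(e_n, W) ≥ 1/√2. -/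
open scoped RealInnerProductSpace
open Metric in
lemma infDist_submodule_eq_norm_sub_proj {V : Type*} [NormedAddCommGroup V]
    [InnerProductSpace ℝ V] (W : Submodule ℝ V) [W.HasOrthogonalProjection] (v : V) :
    Metric.infDist v (W : Set V) = ‖v - Submodule.orthogonalProjectionOnto W v‖ := by
  rw [Metric.infDist_eq_iInf, show ‖v - (W.orthogonalProjectionOnto v : V)‖ = ‖v - W.starProjection v‖ from rfl, Submodule.starProjection_minimal]
  exact iInf_congr fun w => dist_eq_norm _ _

/-- If `e₁, …, e_{2N}` are pairwise orthogonal unit vectors in a Hilbert space, then any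
subspace of dimension at most `N` misses one of them by at least `1/√2`. -/
theorem orthonormal_infDist_lower_bound {V : Type*} [NormedAddCommGroup V]
    [InnerProductSpace ℝ V] [CompleteSpace V]
    (N : ℕ) (hN : 0 < N) (e : Fin (2 * N) → V) (he : Orthonormal ℝ e)
    (W : Submodule ℝ V) (hWfin : FiniteDimensional ℝ W) (hW : Module.finrank ℝ W ≤ N) :
    1 / Real.sqrt 2 ≤ ⨆ i : Fin (2 * N), Metric.infDist (e i) (W : Set V) := by
  haveI : W.HasOrthogonalProjection := inferInstance
  set P : V → V := fun v => (Submodule.orthogonalProjectionOnto W v : V) with hP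
  set d : Fin (2 * N) → ℝ := fun i => Metric.infDist (e i) (W : Set V) with hd
  have hd_eq : ∀ i, d i = ‖e i - P (e i)‖ := fun i =>
    infDist_submodule_eq_norm_sub_proj W (e i)
  have hd_nonneg : ∀ i, 0 ≤ d i := fun i => Metric.infDist_nonneg
  -- d i ^ 2 = 1 - ‖P (e i)‖^2
  have hdsq : ∀ i, d i ^ 2 = 1 - ‖P (e i)‖ ^ 2 := by
    intro i
    have h1 : ‖e i‖ = 1 := he.1 i
    have := Submodule.norm_sq_eq_add_norm_sq_projection (e i) W
    rw [h1] at this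
    rw [hd_eq i]
    have h2 : ‖e i - P (e i)‖ = ‖(Submodule.orthogonalProjectionOnto Wᗮ (e i) : V)‖ := by
      rw [Submodule.orthogonalProjectionOnto_orthogonal]; rfl
    rw [h2]
    simp only [hP, Submodule.norm_coe] at this ⊢
    linarith
  -- orthonormal basis of W
  obtain b := stdOrthonormalBasis ℝ W
  -- ‖P (e i)‖^2 = ∑ j, ⟪(b j : V), e i⟫ ^ 2
  have hproj : ∀ i, ‖P (e i)‖ ^ 2 = ∑ j, ⟪((b j : W) : V), e i⟫ ^ 2 := by
    intro i
    have hx : ‖(Submodule.orthogonalProjectionOnto W (e i) : W)‖ ^ 2 =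
        ∑ j, ⟪Submodule.orthogonalProjectionOnto W (e i), b j⟫ * ⟪b j, Submodule.orthogonalProjectionOnto W (e i)⟫ := by
      rw [b.sum_inner_mul_inner]
      rw [← real_inner_self_eq_norm_sq]
    have hPi : ‖P (e i)‖ = ‖(Submodule.orthogonalProjectionOnto W (e i) : W)‖ := rfl
    rw [hPi, hx]
    congr 1
    ext j
    have hleft : ⟪b j, Submodule.orthogonalProjectionOnto W (e i)⟫ = ⟪((b j : W) : V), e i⟫ :=
      Submodule.inner_orthogonalProjectionOnto_eq_of_mem_left (K := W) (b j) (e i)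
    have hc : ⟪Submodule.orthogonalProjectionOnto W (e i), b j⟫ = ⟪((b j : W) : V), e i⟫ := by
      rw [real_inner_comm]; exact hleft
    rw [hc, hleft, sq]
  -- sum of projections squared is at most N
  have hsum_proj : ∑ i, ‖P (e i)‖ ^ 2 ≤ (N : ℝ) := by
    calc ∑ i, ‖P (e i)‖ ^ 2 = ∑ i, ∑ j, ⟪((b j : W) : V), e i⟫ ^ 2 := by
          exact Finset.sum_congr rfl fun i _ => hproj i
      _ = ∑ j, ∑ i, ⟪((b j : W) : V), e i⟫ ^ 2 := Finset.sum_comm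
      _ ≤ ∑ j : Fin (Module.finrank ℝ W), (1 : ℝ) := by
          apply Finset.sum_le_sum
          intro j _
          have hb := he.sum_inner_products_le (𝕜 := ℝ) ((b j : W) : V) (s := Finset.univ)
          have hbn : ‖((b j : W) : V)‖ = 1 := by
            rw [Submodule.norm_coe]; exact b.orthonormal.1 j
          rw [hbn, one_pow] at hb
          refine le_trans (le_of_eq ?_) hb
          refine Finset.sum_congr rfl fun i _ => ?_
          rw [real_inner_comm, Real.norm_eq_abs, sq_abs]
      _ = (Module.finrank ℝ W : ℝ) := by simp
      _ ≤ (N : ℝ) := by exact_mod_cast hW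
  -- so sum of d i ^2 ≥ N
  have hsum_d : (N : ℝ) ≤ ∑ i, d i ^ 2 := by
    have : ∑ i, d i ^ 2 = (2 * N : ℕ) - ∑ i, ‖P (e i)‖ ^ 2 := by
      rw [Finset.sum_congr rfl fun i _ => hdsq i, Finset.sum_sub_distrib]
      simp
    rw [this]
    push_cast
    linarith
  -- hence some d i ^ 2 ≥ 1/2
  have hexists : ∃ i, (1 : ℝ) / 2 ≤ d i ^ 2 := by
    by_contra h
    push_neg at h
    have : ∑ i, d i ^ 2 < ∑ i : Fin (2 * N), (1 : ℝ) / 2 := by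
      apply Finset.sum_lt_sum_of_nonempty
      · simpa [Finset.univ_nonempty_iff] using Fin.pos_iff_nonempty.mp (by omega)
      · intro i _; exact h i
    rw [Finset.sum_const, Finset.card_univ, Fintype.card_fin, nsmul_eq_mul] at this
    push_cast at this
    linarith
  obtain ⟨i, hi⟩ := hexists
  have hdi : 1 / Real.sqrt 2 ≤ d i := by
    have h2 : (0:ℝ) < Real.sqrt 2 := Real.sqrt_pos.mpr (by norm_num)
    rw [div_le_iff₀ h2] at *
    nlinarith [Real.sq_sqrt (by norm_num : (2:ℝ) ≥ 0), hd_nonneg i, h2]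
  refine le_trans hdi ?_
  exact le_ciSup (Set.Finite.bddAbove (Set.finite_range d)) i
end

section
/- Consider the subset M of c₀(ℕ) ⊂ ℓ^∞(ℕ) consisting of all sequences taking only the values 0 and 1 that converge to 0. Every element of M has ℓ^∞-distance exactly 1/2 to the constant sequence with value 1/2, but for every finite-dimensional subspace W of c₀(ℕ), sup_{v ∈ M} dist_∞(v, W) ≥ 1/2; moreover no finite-dimensional subspace of c₀ achieves sup_{v ∈ M} dist_∞(v, W) < 1/2. -/
open ZeroAtInfty

noncomputable def eN (N : ℕ) : C₀(ℕ, ℝ) :=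
  ⟨⟨fun n => if n = N then 1 else 0, continuous_of_discreteTopology⟩, by
    refine Filter.Tendsto.congr' ?_ tendsto_const_nhds
    have h : {n : ℕ | n ≠ N} ∈ Filter.cocompact ℕ := by
      rw [Filter.mem_cocompact]
      exact ⟨{N}, Set.finite_singleton N |>.isCompact, by intro x hx; simpa using hx⟩
    filter_upwards [h] with n hn
    simp [hn]⟩

lemma abs_apply_le_norm (f : C₀(ℕ, ℝ)) (n : ℕ) : |f n| ≤ ‖f‖ := by
  rw [← ZeroAtInftyContinuousMap.norm_toBCF_eq_norm]
  exact f.toBCF.norm_coe_le_norm n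

lemma norm_le_of (f : C₀(ℕ, ℝ)) (C : ℝ) (hC : 0 ≤ C) (h : ∀ n, |f n| ≤ C) : ‖f‖ ≤ C := by
  rw [← ZeroAtInftyContinuousMap.norm_toBCF_eq_norm]
  exact BoundedContinuousFunction.norm_le hC |>.2 h

lemma abs_sub_le_dist (f g : C₀(ℕ, ℝ)) (n : ℕ) : |f n - g n| ≤ dist f g := by
  rw [dist_eq_norm]
  simpa using abs_apply_le_norm (f - g) n

lemma key (W : Submodule ℝ C₀(ℕ, ℝ)) (hW : FiniteDimensional ℝ W) :
    ∃ N, ∀ w ∈ W, (1/2 : ℝ) ≤ dist (eN N) w := by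
  have hK : IsCompact (Subtype.val '' (Metric.closedBall (0 : W) 2)) :=
    (isCompact_closedBall _ _).image continuous_subtype_val
  obtain ⟨t, hts, htf, htc⟩ := hK.finite_cover_balls (e := 1/4) (by norm_num)
  -- find N with |c N| < 1/4 for all c ∈ t
  have hev : ∀ᶠ n in Filter.cocompact ℕ, ∀ c ∈ t, |c n| < 1/4 := by
    rw [Filter.eventually_all_finite htf]
    intro c _
    have := c.zero_at_infty'
    have : ∀ᶠ n in Filter.cocompact ℕ, dist (c n) 0 < 1/4 :=
      this (Metric.ball_mem_nhds 0 (by norm_num))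
    simpa [Real.dist_eq] using this
  obtain ⟨N, hN⟩ := hev.exists
  refine ⟨N, fun w hw => ?_⟩
  by_cases hnorm : ‖w‖ ≤ 2
  · have hmem : w ∈ Subtype.val '' (Metric.closedBall (0 : W) 2) :=
      ⟨⟨w, hw⟩, by rw [Metric.mem_closedBall]; show dist w 0 ≤ 2; rw [dist_zero_right]; exact hnorm, rfl⟩
    obtain ⟨c, hct, hc⟩ := Set.mem_iUnion₂.1 (htc hmem)
    have h1 : |w N| < 1/2 := by
      have h2 : |w N - c N| ≤ dist w c := abs_sub_le_dist w c N
      have h3 : dist w c < 1/4 := hc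
      have h4 := hN c hct
      calc |w N| ≤ |w N - c N| + |c N| := by
            have := abs_sub_abs_le_abs_sub (w N) (c N)
            nlinarith [abs_nonneg (w N - c N), abs_add_le (w N - c N) (c N),
              abs_sub_le (w N) (c N) 0]
        _ < 1/2 := by linarith
    have h5 : |eN N N - w N| ≤ dist (eN N) w := abs_sub_le_dist _ _ N
    have h6 : eN N N = 1 := by simp [eN]
    rw [h6] at h5
    have : (1:ℝ) - |w N| ≤ |1 - w N| := by
      have := abs_sub_abs_le_abs_sub (1:ℝ) (w N); simpa using this
    linarith
  · have : (2:ℝ) < ‖w‖ := not_le.1 hnorm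
    have h1 : ‖eN N‖ ≤ 1 := by
      refine norm_le_of _ 1 one_pos.le fun n => ?_
      by_cases h : n = N <;> simp [eN, h]
    have h2 : ‖w‖ - ‖eN N‖ ≤ ‖eN N - w‖ := by
      have := norm_sub_norm_le (eN N) w
      have h3 := norm_sub_rev (eN N) w
      linarith [abs_le.1 (abs_norm_sub_norm_le (eN N) w) |>.1]
    rw [dist_eq_norm]
    linarith
/-- In `c₀(ℕ)` the set `M` of 0-1 sequences has distance exactly `1/2` to the constant
sequence `1/2`, yet no finite-dimensional subspace approximates `M` with worst-case error
below `1/2`. -/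
theorem c0_zero_one_sequences_not_approximable :
    (∀ v ∈ {v : C₀(ℕ, ℝ) | ∀ n, v n = 0 ∨ v n = 1},
      (⨆ n : ℕ, |v n - (1/2 : ℝ)|) = 1/2) ∧
    (∀ W : Submodule ℝ C₀(ℕ, ℝ), FiniteDimensional ℝ W →
      1/2 ≤ ⨆ v : {v : C₀(ℕ, ℝ) | ∀ n, v n = 0 ∨ v n = 1},
        Metric.infDist (v : C₀(ℕ, ℝ)) (W : Set C₀(ℕ, ℝ))) ∧
    ¬ ∃ W : Submodule ℝ C₀(ℕ, ℝ), FiniteDimensional ℝ W ∧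
        (⨆ v : {v : C₀(ℕ, ℝ) | ∀ n, v n = 0 ∨ v n = 1},
          Metric.infDist (v : C₀(ℕ, ℝ)) (W : Set C₀(ℕ, ℝ))) < 1/2 := by
  have part1 : ∀ v ∈ {v : C₀(ℕ, ℝ) | ∀ n, v n = 0 ∨ v n = 1},
      (⨆ n : ℕ, |v n - (1/2 : ℝ)|) = 1/2 := by
    intro v hv
    have h : ∀ n, |v n - (1/2 : ℝ)| = 1/2 := by
      intro n; rcases hv n with h | h <;> rw [h] <;> norm_num
    simp_rw [h]
    exact ciSup_const
  have part2 : ∀ W : Submodule ℝ C₀(ℕ, ℝ), FiniteDimensional ℝ W →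
      1/2 ≤ ⨆ v : {v : C₀(ℕ, ℝ) | ∀ n, v n = 0 ∨ v n = 1},
        Metric.infDist (v : C₀(ℕ, ℝ)) (W : Set C₀(ℕ, ℝ)) := by
    intro W hW
    obtain ⟨N, hN⟩ := key W hW
    have hmem : eN N ∈ {v : C₀(ℕ, ℝ) | ∀ n, v n = 0 ∨ v n = 1} := by
      intro n; by_cases h : n = N
      · right; simp [eN, h]
      · left; simp [eN, h]
    have hbdd : BddAbove (Set.range fun v : {v : C₀(ℕ, ℝ) | ∀ n, v n = 0 ∨ v n = 1} =>
        Metric.infDist (v : C₀(ℕ, ℝ)) (W : Set C₀(ℕ, ℝ))) := by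
      refine ⟨1, fun x hx => ?_⟩
      obtain ⟨⟨v, hv⟩, rfl⟩ := hx
      have h0 : (0 : C₀(ℕ, ℝ)) ∈ (W : Set C₀(ℕ, ℝ)) := W.zero_mem
      have h1 : Metric.infDist v (W : Set C₀(ℕ, ℝ)) ≤ dist v 0 :=
        Metric.infDist_le_dist_of_mem h0
      have h2 : ‖v‖ ≤ 1 := by
        refine norm_le_of v 1 one_pos.le fun n => ?_
        rcases hv n with h | h <;> rw [h] <;> norm_num
      simpa [dist_zero_right] using h1.trans h2
    have hge : (1/2 : ℝ) ≤ Metric.infDist (eN N) (W : Set C₀(ℕ, ℝ)) := by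
      by_contra h
      push_neg at h
      rw [Metric.infDist_lt_iff ⟨0, W.zero_mem⟩] at h
      obtain ⟨y, hy, hd⟩ := h
      linarith [hN y hy]
    exact hge.trans (le_ciSup hbdd ⟨eN N, hmem⟩)
  refine ⟨part1, part2, ?_⟩
  rintro ⟨W, hW, hlt⟩
  exact absurd (part2 W hW) (not_le.2 hlt)
end

section
/- Let V be a Hilbert space, a_μ a family of continuous coercive bilinear forms with condition number κ_μ = ‖a_μ‖/C_{a_μ}, and suppose the greedy algorithm at each step selects a parameter μ* maximizing the residual-based error bound Δ(μ) = (1/C_{a_μ})‖R_μ(u_{N,μ})‖_{V'}. Then the resulting sequence of snapshots Φ(μ*) is a weak greedy sequence for im(Φ) with parameter γ = inf_μ (‖a_μ‖/C_{a_μ})^{-2}, assuming γ > 0. -/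
/-- Selecting the parameter maximizing the residual-based error estimator yields a weak
greedy step with parameter `γ = inf_μ (‖a_μ‖/C_{a_μ})^{-2}`. -/
theorem greedy_with_estimator_is_weak_greedy {V : Type*} [NormedAddCommGroup V]
    [InnerProductSpace ℝ V] [CompleteSpace V]
    {P : Type*} [Nonempty P]
    (a : P → V →L[ℝ] V →L[ℝ] ℝ) (C : P → ℝ) (hCpos : ∀ μ, 0 < C μ)
    (hcoer : ∀ μ (v : V), C μ * ‖v‖ ^ 2 ≤ a μ v v)
    (f : P → V →L[ℝ] ℝ) (Φ : P → V) (hsol : ∀ μ (v : V), a μ (Φ μ) v = f μ v)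
    (VN : Submodule ℝ V) (uN : P → V)
    (huN : ∀ μ, uN μ ∈ VN) (hgal : ∀ μ, ∀ v ∈ VN, a μ (uN μ) v = f μ v)
    (R : P → V →L[ℝ] ℝ) (hR : ∀ μ (w : V), R μ w = f μ w - a μ (uN μ) w)
    (hest_low : ∀ μ, C μ * ‖Φ μ - uN μ‖ ≤ ‖R μ‖)
    (hest_up : ∀ μ, ‖R μ‖ ≤ ‖a μ‖ * ‖Φ μ - uN μ‖)
    (hquasi : ∀ μ, ‖Φ μ - uN μ‖ ≤ (‖a μ‖ / C μ) * Metric.infDist (Φ μ) (VN : Set V))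
    (γ : ℝ) (hγ : γ = ⨅ μ, ((‖a μ‖ / C μ) ^ 2)⁻¹) (hγpos : 0 < γ)
    (μstar : P) (hmax : ∀ μ, (1 / C μ) * ‖R μ‖ ≤ (1 / C μstar) * ‖R μstar‖) :
    γ * (⨆ μ, Metric.infDist (Φ μ) (VN : Set V)) ≤
      Metric.infDist (Φ μstar) (VN : Set V) := by
  set d : P → ℝ := fun μ => Metric.infDist (Φ μ) (VN : Set V) with hd
  set κ2 : ℝ := (‖a μstar‖ / C μstar) ^ 2 with hκ2
  have hdnn : ∀ μ, 0 ≤ d μ := fun μ => Metric.infDist_nonneg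
  have hκ2nn : 0 ≤ κ2 := sq_nonneg _
  have key : ∀ μ, d μ ≤ κ2 * d μstar := by
    intro μ
    have h1 : d μ ≤ ‖Φ μ - uN μ‖ := by
      have := Metric.infDist_le_dist_of_mem (x := Φ μ) (huN μ)
      rwa [dist_eq_norm] at this
    have h2 : ‖Φ μ - uN μ‖ ≤ (1 / C μ) * ‖R μ‖ := by
      rw [one_div, inv_mul_eq_div, le_div_iff₀ (hCpos μ), mul_comm]
      exact hest_low μ
    have h3 : (1 / C μstar) * ‖R μstar‖ ≤
        (1 / C μstar) * (‖a μstar‖ * ‖Φ μstar - uN μstar‖) := by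
      exact mul_le_mul_of_nonneg_left (hest_up μstar)
        (one_div_nonneg.mpr (hCpos μstar).le)
    have h4 : (1 / C μstar) * (‖a μstar‖ * ‖Φ μstar - uN μstar‖) ≤
        (1 / C μstar) * (‖a μstar‖ * ((‖a μstar‖ / C μstar) * d μstar)) := by
      refine mul_le_mul_of_nonneg_left ?_ (one_div_nonneg.mpr (hCpos μstar).le)
      exact mul_le_mul_of_nonneg_left (hquasi μstar) (norm_nonneg (a μstar))
    have heq : (1 / C μstar) * (‖a μstar‖ * ((‖a μstar‖ / C μstar) * d μstar))
        = κ2 * d μstar := by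
      field_simp [hκ2]
      ring
    calc d μ ≤ ‖Φ μ - uN μ‖ := h1
      _ ≤ (1 / C μ) * ‖R μ‖ := h2
      _ ≤ (1 / C μstar) * ‖R μstar‖ := hmax μ
      _ ≤ (1 / C μstar) * (‖a μstar‖ * ‖Φ μstar - uN μstar‖) := h3
      _ ≤ (1 / C μstar) * (‖a μstar‖ * ((‖a μstar‖ / C μstar) * d μstar)) := h4
      _ = κ2 * d μstar := heq
  have hsup : (⨆ μ, d μ) ≤ κ2 * d μstar :=
    ciSup_le key
  have hγle : γ ≤ κ2⁻¹ := by
    rw [hγ]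
    exact ciInf_le ⟨0, fun x ⟨μ, hμ⟩ => hμ ▸ by positivity⟩ μstar
  have hγκ : γ * κ2 ≤ 1 := by
    rcases eq_or_lt_of_le hκ2nn with h0 | hpos
    · rw [← h0, mul_zero]; norm_num
    · calc γ * κ2 ≤ κ2⁻¹ * κ2 := mul_le_mul_of_nonneg_right hγle hκ2nn
        _ = 1 := inv_mul_cancel₀ (ne_of_gt hpos)
  calc γ * (⨆ μ, d μ) ≤ γ * (κ2 * d μstar) :=
        mul_le_mul_of_nonneg_left hsup (le_of_lt hγpos)
    _ = (γ * κ2) * d μstar := by ring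
    _ ≤ 1 * d μstar := mul_le_mul_of_nonneg_right hγκ (hdnn μstar)
    _ = d μstar := one_mul _
end

section
/- Let V be a Hilbert space and M ⊆ V a compact subset. Then for every N ∈ ℕ there exists a linear subspace V_N ⊆ V with dim V_N ≤ N such that sup_{v ∈ M} dist(v, V_N) = d_N(M), i.e. an optimal N-dimensional subspace for the Kolmogorov N-width always exists. -/
open Metric Module Set Finset
open scoped RealInnerProductSpace

section Helpers



variable {V : Type*} [NormedAddCommGroup V] [InnerProductSpace ℝ V] [CompleteSpace V]

/-- infDist to a submodule with orthogonal projection equals distance to the projection. -/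
lemma infDist_eq_norm_sub_proj_s15 (W : Submodule ℝ V) [Submodule.HasOrthogonalProjection W] (v : V) :
    Metric.infDist v (W : Set V) = ‖v - (W.orthogonalProjectionOnto v : V)‖ := by
  set p : V := (W.orthogonalProjectionOnto v : V) with hp
  have hpmem : p ∈ W := Submodule.coe_mem _
  have hperp : v - p ∈ Wᗮ := Submodule.sub_starProjection_mem_orthogonal v
  apply le_antisymm
  · simpa [dist_eq_norm] using Metric.infDist_le_dist_of_mem (s := (W : Set V)) hpmem
  · rw [Metric.infDist_eq_iInf]
    refine le_ciInf fun w => ?_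
    have hw : (w : V) ∈ W := w.2
    have hinner : ⟪v - p, p - (w : V)⟫ = 0 := by
      have := (Submodule.mem_orthogonal _ _).1 hperp (p - (w : V)) (W.sub_mem hpmem hw)
      rwa [real_inner_comm] at this
    have hsq : ‖v - p‖ ^ 2 ≤ ‖v - (w : V)‖ ^ 2 := by
      have hd : v - (w : V) = (v - p) + (p - (w : V)) := by abel
      rw [hd, norm_add_sq_real, hinner]
      nlinarith [sq_nonneg ‖p - (w : V)‖]
    have := (abs_le_of_sq_le_sq' hsq (norm_nonneg _)).2
    rw [dist_eq_norm]
    exact this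

lemma norm_sub_proj_sq (W : Submodule ℝ V) [Submodule.HasOrthogonalProjection W] (v : V) :
    ‖v - (W.orthogonalProjectionOnto v : V)‖ ^ 2 = ‖v‖ ^ 2 - ‖(W.orthogonalProjectionOnto v : V)‖ ^ 2 := by
  set p : V := (W.orthogonalProjectionOnto v : V) with hp
  have hperp : v - p ∈ Wᗮ := Submodule.sub_starProjection_mem_orthogonal v
  have hinner : ⟪v - p, p⟫ = 0 := by
    have := (Submodule.mem_orthogonal _ _).1 hperp p (Submodule.coe_mem _)
    rwa [real_inner_comm] at this
  have hd : v = (v - p) + p := by abel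
  have := norm_add_sq_real (v - p) p
  rw [← hd, hinner] at this
  linarith

/-- Bessel-type inequality from the Gram condition. -/
lemma bessel_of_gram {N : ℕ} (u : Fin N → V)
    (hG : ∀ c : Fin N → ℝ, ‖∑ i, c i • u i‖ ^ 2 ≤ ∑ i, (c i) ^ 2) (w : V) :
    ∑ i, ⟪u i, w⟫ ^ 2 ≤ ‖w‖ ^ 2 := by
  set a : Fin N → ℝ := fun i => ⟪u i, w⟫ with ha
  set s : V := ∑ i, a i • u i with hs
  have hsw : ⟪s, w⟫ = ∑ i, a i ^ 2 := by
    rw [hs, sum_inner]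
    simp only [real_inner_smul_left, sq, ha]
  have h1 : (∑ i, a i ^ 2) ^ 2 ≤ ‖s‖ ^ 2 * ‖w‖ ^ 2 := by
    have := real_inner_mul_inner_self_le s w
    rw [hsw, real_inner_self_eq_norm_sq, real_inner_self_eq_norm_sq] at this
    nlinarith [this]
  have h2 : ‖s‖ ^ 2 ≤ ∑ i, a i ^ 2 := hG a
  have hA : 0 ≤ ∑ i, a i ^ 2 := Finset.sum_nonneg fun i _ => sq_nonneg _
  rcases eq_or_lt_of_le hA with h | h
  · rw [← h]; positivity
  · nlinarith [h1, h2, sq_nonneg ‖w‖]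

/-- Pad a sum over `Fin m` to a sum over `Fin N`. -/
lemma sum_pad {m N : ℕ} (hmN : m ≤ N) (g : V → ℝ) (hg : g 0 = 0) (b : Fin m → V) :
    ∑ i : Fin N, g (if h : (i : ℕ) < m then b ⟨i, h⟩ else 0) = ∑ i : Fin m, g (b i) := by
  set G : ℕ → ℝ := fun n => if h : n < m then g (b ⟨n, h⟩) else 0 with hG
  have h1 : ∑ i : Fin N, g (if h : (i : ℕ) < m then b ⟨i, h⟩ else 0) = ∑ i : Fin N, G i := by
    refine Finset.sum_congr rfl fun i _ => ?_
    by_cases h : (i : ℕ) < m <;> simp [hG, h, hg]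
  have h2 : ∑ i : Fin m, G i = ∑ i : Fin m, g (b i) := by
    refine Finset.sum_congr rfl fun i _ => ?_
    simp [hG, i.2]
  rw [h1, ← h2, Fin.sum_univ_eq_sum_range G N, Fin.sum_univ_eq_sum_range G m]
  refine (Finset.sum_subset (Finset.range_subset_range.2 hmN) fun x _ hx => ?_).symm
  simp only [Finset.mem_range, not_lt] at hx
  simp [hG, not_lt.2 hx]

/-- Existence of a "padded orthonormal basis" for a finite-dimensional submodule. -/
lemma exists_padded_onb (W : Submodule ℝ V) [FiniteDimensional ℝ W] {N : ℕ}
    (hN : finrank ℝ W ≤ N) :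
    ∃ u : Fin N → V, (∀ i, u i ∈ W) ∧
      (∀ c : Fin N → ℝ, ‖∑ i, c i • u i‖ ^ 2 ≤ ∑ i, (c i) ^ 2) ∧
      (∀ w ∈ W, ‖w‖ ^ 2 ≤ ∑ i, ⟪u i, w⟫ ^ 2) := by
  classical
  set m := finrank ℝ W with hm
  set b := stdOrthonormalBasis ℝ W with hb
  set u : Fin N → V := fun i => if h : (i : ℕ) < m then (b ⟨i, h⟩ : V) else 0 with hu
  have hGram : ∀ i j : Fin N, ⟪u i, u j⟫ = if i = j ∧ (i : ℕ) < m then 1 else 0 := by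
    intro i j
    have hon := (orthonormal_iff_ite (𝕜 := ℝ)).1 b.orthonormal
    by_cases hi : (i : ℕ) < m
    · by_cases hj : (j : ℕ) < m
      · simp only [hu, dif_pos hi, dif_pos hj]
        have hc : ⟪((b ⟨i, hi⟩ : W) : V), ((b ⟨j, hj⟩ : W) : V)⟫ = ⟪b ⟨i, hi⟩, b ⟨j, hj⟩⟫ :=
          (Submodule.coe_inner W _ _).symm
        rw [hc, hon]
        by_cases hij : i = j
        · subst hij; simp [hi]
        · have h2 : (⟨(i : ℕ), hi⟩ : Fin m) ≠ ⟨j, hj⟩ := by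
            simp only [ne_eq, Fin.mk.injEq]
            exact fun h => hij (Fin.ext h)
          simp [h2, hij]
      · have hij : ¬(i = j ∧ (i : ℕ) < m) := fun h => hj (h.1 ▸ hi)
        simp [hu, dif_neg hj, hij]
    · have hij : ¬(i = j ∧ (i : ℕ) < m) := fun h => hi h.2
      simp [hu, dif_neg hi, hij]
  refine ⟨u, ?_, ?_, ?_⟩
  · intro i
    by_cases h : (i : ℕ) < m <;> simp only [hu, h, dif_pos, dif_neg, not_false_iff]
    · exact Submodule.coe_mem _
    · exact W.zero_mem
  · intro c
    have : ‖∑ i, c i • u i‖ ^ 2 = ∑ i, ∑ j, c i * (c j * ⟪u i, u j⟫) := by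
      rw [← real_inner_self_eq_norm_sq, sum_inner]
      refine Finset.sum_congr rfl fun i _ => ?_
      rw [real_inner_smul_left, inner_sum]
      rw [Finset.mul_sum]
      refine Finset.sum_congr rfl fun j _ => ?_
      rw [real_inner_smul_right]
    rw [this]
    have hrow : ∀ i : Fin N, ∑ j, c i * (c j * ⟪u i, u j⟫)
        = if (i : ℕ) < m then c i ^ 2 else 0 := by
      intro i
      simp only [hGram]
      by_cases hi : (i : ℕ) < m
      · simp only [hi, and_true, if_pos]
        rw [Finset.sum_eq_single i]
        · simp [sq]
        · intro j _ hji; simp [Ne.symm hji]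
        · intro h; exact absurd (Finset.mem_univ i) h
      · simp [hi]
    rw [Finset.sum_congr rfl fun i _ => hrow i]
    refine Finset.sum_le_sum fun i _ => ?_
    by_cases hi : (i : ℕ) < m <;> simp [hi, sq_nonneg]
  · intro w hw
    set w' : W := ⟨w, hw⟩ with hw'
    have hrep : ∑ i, ⟪b i, w'⟫ • b i = w' := b.sum_repr' w'
    have hsum : ⟪(∑ i, ⟪b i, w'⟫ • b i : W), w'⟫ = ∑ i : Fin m, ⟪(b i : V), w⟫ ^ 2 := by
      rw [sum_inner]
      refine Finset.sum_congr rfl fun i _ => ?_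
      rw [real_inner_smul_left, Submodule.coe_inner, sq]
    rw [hrep] at hsum
    have hnorm : ‖w‖ ^ 2 = ∑ i : Fin m, ⟪(b i : V), w⟫ ^ 2 := by
      rw [← hsum, real_inner_self_eq_norm_sq]
      congr 1
    rw [hnorm]
    have hpad := sum_pad (V := V) hN (fun x => ⟪x, w⟫ ^ 2) (by simp) (fun i => (b i : V))
    exact le_of_eq hpad.symm


end Helpers

set_option maxHeartbeats 1000000 in
/-- For a compact subset of a Hilbert space, an optimal subspace for the Kolmogorov
N-width always exists. -/
theorem exists_optimal_subspace {V : Type*} [NormedAddCommGroup V] [InnerProductSpace ℝ V]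
    [CompleteSpace V] (M : Set V) (hM : IsCompact M) (hne : M.Nonempty) (N : ℕ) :
    ∃ W : Submodule ℝ V, FiniteDimensional ℝ W ∧ Module.finrank ℝ W ≤ N ∧
      (⨆ v : M, Metric.infDist (v : V) (W : Set V)) = kolmogorovWidth V N M := by
  classical
  haveI : Nonempty M := hne.to_subtype
  obtain ⟨R, hRB⟩ := (Metric.isBounded_iff_subset_closedBall (0 : V)).1 hM.isBounded
  have hR : ∀ v ∈ M, ‖v‖ ≤ R := fun v hv => by
    simpa [dist_zero_right] using hRB hv
  set g : V → (Fin N → WeakDual ℝ V) → ℝ := fun v φ => ‖v‖ ^ 2 - ∑ i, (φ i v) ^ 2 with hg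
  set F : (Fin N → WeakDual ℝ V) → ℝ := fun φ => ⨆ v : M, g v φ with hF
  have hgle : ∀ (φ) (v : M), g (v : V) φ ≤ R ^ 2 := fun φ v => by
    have h1 : ‖(v : V)‖ ^ 2 ≤ R ^ 2 := by
      have := hR v v.2; nlinarith [norm_nonneg (v : V)]
    have h2 : 0 ≤ ∑ i, (φ i (v : V)) ^ 2 := Finset.sum_nonneg fun i _ => sq_nonneg _
    simp only [hg]; linarith
  have hbdd : ∀ φ, BddAbove (Set.range fun v : M => g (v : V) φ) :=
    fun φ => ⟨R ^ 2, Set.forall_mem_range.2 fun v => hgle φ v⟩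
  have hgcont : ∀ v : V, Continuous fun φ : Fin N → WeakDual ℝ V => g v φ := fun v => by
    simp only [hg]
    exact continuous_const.sub (continuous_finset_sum _ fun i _ =>
      ((WeakDual.eval_continuous v).comp (continuous_apply i)).pow 2)
  have hopen : ∀ c : ℝ, IsOpen {φ : Fin N → WeakDual ℝ V | c < F φ} := fun c => by
    have he : {φ : Fin N → WeakDual ℝ V | c < F φ} = ⋃ v : M, {φ | c < g (v : V) φ} := by
      ext φ
      simp only [Set.mem_setOf_eq, Set.mem_iUnion, hF]
      exact lt_ciSup_iff (hbdd φ)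
    rw [he]
    exact isOpen_iUnion fun v => isOpen_lt continuous_const (hgcont v)
  set K : Set (Fin N → WeakDual ℝ V) :=
    {φ | ∀ (c : Fin N → ℝ) (x : V), (∑ i, c i * φ i x) ^ 2 ≤ (∑ i, (c i) ^ 2) * ‖x‖ ^ 2}
    with hKdef
  have hK0 : (0 : Fin N → WeakDual ℝ V) ∈ K := by
    intro c x
    have : ∀ i : Fin N, ((0 : Fin N → WeakDual ℝ V) i) x = 0 := fun i => rfl
    simp only [this, mul_zero, Finset.sum_const_zero, ne_eq, OfNat.ofNat_ne_zero,
      not_false_eq_true, zero_pow]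
    positivity
  have hKclosed : IsClosed K := by
    have he : K = ⋂ (c : Fin N → ℝ), ⋂ (x : V),
        {φ : Fin N → WeakDual ℝ V | (∑ i, c i * φ i x) ^ 2 ≤ (∑ i, (c i) ^ 2) * ‖x‖ ^ 2} := by
      ext φ
      simp only [hKdef, Set.mem_setOf_eq, Set.mem_iInter]
    rw [he]
    refine isClosed_iInter fun c => isClosed_iInter fun x => ?_
    exact isClosed_le ((continuous_finset_sum _ fun i _ =>
      continuous_const.mul ((WeakDual.eval_continuous x).comp (continuous_apply i))).pow 2)
      continuous_const
  have hKsub : K ⊆ Set.pi Set.univ (fun _ : Fin N =>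
      WeakDual.toStrongDual ⁻¹' Metric.closedBall (0 : StrongDual ℝ V) 1) := by
    intro φ hφ
    rw [Set.mem_univ_pi]
    intro i
    have hb : ∀ x : V, |φ i x| ≤ ‖x‖ := fun x => by
      set c : Fin N → ℝ := fun j => if j = i then 1 else 0 with hc
      have h1 := hφ c x
      have hsum : (∑ j, c j * φ j x) = φ i x := by
        rw [Finset.sum_eq_single i]
        · simp [hc]
        · intro j _ hji; simp [hc, hji]
        · intro h; exact absurd (Finset.mem_univ i) h
      have hsum2 : (∑ j, (c j) ^ 2) = 1 := by
        rw [Finset.sum_eq_single i]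
        · simp [hc]
        · intro j _ hji; simp [hc, hji]
        · intro h; exact absurd (Finset.mem_univ i) h
      rw [hsum, hsum2, one_mul] at h1
      have h2 := abs_le_of_sq_le_sq' h1 (norm_nonneg x)
      exact abs_le.2 h2
    simp only [Set.mem_preimage, Metric.mem_closedBall, dist_zero_right]
    refine ContinuousLinearMap.opNorm_le_bound _ zero_le_one fun x => ?_
    rw [one_mul]
    simpa [Real.norm_eq_abs] using hb x
  have hKcpt : IsCompact K :=
    (isCompact_univ_pi fun _ : Fin N =>
      WeakDual.isCompact_closedBall (𝕜 := ℝ) (E := V) 0 1).of_isClosed_subset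
      hKclosed hKsub
  obtain ⟨φs, hφsK, hmin⟩ : ∃ φs ∈ K, ∀ ψ ∈ K, F φs ≤ F ψ := by
    by_contra hcon
    push_neg at hcon
    have hcover : K ⊆ ⋃ ψ : K, {φ : Fin N → WeakDual ℝ V | F (ψ : Fin N → WeakDual ℝ V) < F φ} := by
      intro φ hφ
      obtain ⟨ψ, hψK, hψ⟩ := hcon φ hφ
      exact Set.mem_iUnion.2 ⟨⟨ψ, hψK⟩, hψ⟩
    obtain ⟨t, ht⟩ := hKcpt.elim_finite_subcover _
      (fun ψ : K => hopen (F (ψ : Fin N → WeakDual ℝ V))) hcover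
    have h0t := ht hK0
    rw [Set.mem_iUnion₂] at h0t
    obtain ⟨ψ₁, hψ₁t, -⟩ := h0t
    obtain ⟨ψ₀, hψ₀t, hψ₀min⟩ := t.exists_min_image
      (fun ψ : K => F (ψ : Fin N → WeakDual ℝ V)) ⟨ψ₁, hψ₁t⟩
    have hm := ht ψ₀.2
    rw [Set.mem_iUnion₂] at hm
    obtain ⟨ψ, hψt, hψlt⟩ := hm
    exact absurd (hψ₀min ψ hψt) (not_le.2 hψlt)
  set u : Fin N → V :=
    fun i => (InnerProductSpace.toDual ℝ V).symm (WeakDual.toStrongDual (φs i)) with hudef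
  have huφ : ∀ (i : Fin N) (x : V), ⟪u i, x⟫ = φs i x := fun i x => by
    simp only [hudef]
    exact InnerProductSpace.toDual_symm_apply
  set Ws : Submodule ℝ V := Submodule.span ℝ (Set.range u) with hWsdef
  haveI hfin : FiniteDimensional ℝ Ws := FiniteDimensional.span_of_finite ℝ (Set.finite_range u)
  have hrank : finrank ℝ Ws ≤ N := by
    haveI := Set.fintypeRange u
    refine le_trans (finrank_span_le_card (R := ℝ) (Set.range u)) ?_
    rw [Set.toFinset_card]
    simpa using Fintype.card_range_le u
  have hGu : ∀ c : Fin N → ℝ, ‖∑ i, c i • u i‖ ^ 2 ≤ ∑ i, (c i) ^ 2 := by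
    intro c
    set s := ∑ i, c i • u i with hs
    have hsx : ∀ x : V, ⟪s, x⟫ = ∑ i, c i * φs i x := fun x => by
      rw [hs, sum_inner]
      exact Finset.sum_congr rfl fun i _ => by rw [real_inner_smul_left, huφ]
    have h1 := hφsK c s
    rw [← hsx s, real_inner_self_eq_norm_sq] at h1
    rcases eq_or_lt_of_le (sq_nonneg ‖s‖) with h0 | h0
    · rw [← h0]; exact Finset.sum_nonneg fun i _ => sq_nonneg _
    · nlinarith [h1, h0]
  refine ⟨Ws, hfin, hrank, ?_⟩
  have hbddS : ∀ W : Submodule ℝ V,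
      BddAbove (Set.range fun v : M => Metric.infDist (v : V) (W : Set V)) := fun W => by
    refine ⟨R, Set.forall_mem_range.2 fun v => ?_⟩
    have h0 : (0 : V) ∈ (W : Set V) := W.zero_mem
    calc Metric.infDist (v : V) (W : Set V) ≤ dist (v : V) 0 :=
          Metric.infDist_le_dist_of_mem h0
      _ = ‖(v : V)‖ := by rw [dist_zero_right]
      _ ≤ R := hR v v.2
  have hSnn : ∀ W : Submodule ℝ V, 0 ≤ ⨆ v : M, Metric.infDist (v : V) (W : Set V) := fun W => by
    obtain ⟨v₀, hv₀⟩ := hne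
    exact le_trans Metric.infDist_nonneg (le_ciSup (hbddS W) ⟨v₀, hv₀⟩)
  have hfactb : ∀ v : V, Metric.infDist v (Ws : Set V) ^ 2 ≤ g v φs := by
    intro v
    set p : V := (Ws.orthogonalProjectionOnto v : V) with hp
    have h1 : Metric.infDist v (Ws : Set V) = ‖v - p‖ := infDist_eq_norm_sub_proj_s15 Ws v
    have h2 : ‖v - p‖ ^ 2 = ‖v‖ ^ 2 - ‖p‖ ^ 2 := norm_sub_proj_sq Ws v
    have hperp : v - p ∈ Wsᗮ := Submodule.sub_starProjection_mem_orthogonal v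
    have huvp : ∀ i, ⟪u i, v⟫ = ⟪u i, p⟫ := fun i => by
      have hmem : u i ∈ Ws := Submodule.subset_span (Set.mem_range_self i)
      have h0 : ⟪u i, v - p⟫ = 0 := (Submodule.mem_orthogonal _ _).1 hperp (u i) hmem
      rw [inner_sub_right] at h0
      linarith
    have hbes := bessel_of_gram u hGu p
    have hsum : ∑ i, (φs i v) ^ 2 = ∑ i, ⟪u i, p⟫ ^ 2 :=
      Finset.sum_congr rfl fun i _ => by rw [← huφ, huvp]
    simp only [hg]
    rw [h1, h2, hsum]
    linarith
  have hfacta : ∀ (W' : Submodule ℝ V), FiniteDimensional ℝ W' → finrank ℝ W' ≤ N →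
      ∃ φ ∈ K, ∀ v : V, g v φ ≤ Metric.infDist v (W' : Set V) ^ 2 := by
    intro W' hfd hrk
    haveI := hfd
    obtain ⟨u', hmem, hG, hPar⟩ := exists_padded_onb W' hrk
    set φ : Fin N → WeakDual ℝ V :=
      fun i => StrongDual.toWeakDual (InnerProductSpace.toDual ℝ V (u' i)) with hφdef
    have hφx : ∀ (i : Fin N) (x : V), φ i x = ⟪u' i, x⟫ := fun i x => by
      simp only [hφdef]
      exact InnerProductSpace.toDual_apply_apply
    have hsx : ∀ (c : Fin N → ℝ) (x : V), (∑ i, c i * φ i x) = ⟪∑ i, c i • u' i, x⟫ :=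
      fun c x => by
        rw [sum_inner]
        exact (Finset.sum_congr rfl fun i _ => by rw [real_inner_smul_left, hφx]).symm
    have hφK : φ ∈ K := by
      intro c x
      rw [hsx]
      have h1 := real_inner_mul_inner_self_le (∑ i, c i • u' i) x
      rw [real_inner_self_eq_norm_sq, real_inner_self_eq_norm_sq] at h1
      have h2 := hG c
      nlinarith [sq_nonneg ‖x‖, h1, h2]
    refine ⟨φ, hφK, fun v => ?_⟩
    set p : V := (W'.orthogonalProjectionOnto v : V) with hp
    have h1 : Metric.infDist v (W' : Set V) = ‖v - p‖ := infDist_eq_norm_sub_proj_s15 W' v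
    have h2 : ‖v - p‖ ^ 2 = ‖v‖ ^ 2 - ‖p‖ ^ 2 := norm_sub_proj_sq W' v
    have hperp : v - p ∈ W'ᗮ := Submodule.sub_starProjection_mem_orthogonal v
    have huvp : ∀ i, ⟪u' i, v⟫ = ⟪u' i, p⟫ := fun i => by
      have h0 : ⟪u' i, v - p⟫ = 0 := (Submodule.mem_orthogonal _ _).1 hperp (u' i) (hmem i)
      rw [inner_sub_right] at h0
      linarith
    have hPar' := hPar p (Submodule.coe_mem _)
    have hsum : ∑ i, (φ i v) ^ 2 = ∑ i, ⟪u' i, p⟫ ^ 2 :=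
      Finset.sum_congr rfl fun i _ => by rw [hφx, huvp]
    simp only [hg]
    rw [h1, h2, hsum]
    linarith
  have final : ∀ (W' : Submodule ℝ V), FiniteDimensional ℝ W' → finrank ℝ W' ≤ N →
      (⨆ v : M, Metric.infDist (v : V) (Ws : Set V))
        ≤ ⨆ v : M, Metric.infDist (v : V) (W' : Set V) := by
    intro W' hfd hrk
    obtain ⟨φ, hφK, hφle⟩ := hfacta W' hfd hrk
    have hA : (⨆ v : M, Metric.infDist (v : V) (Ws : Set V)) ≤ Real.sqrt (F φs) := by
      refine ciSup_le fun v => ?_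
      have h3 : g (v : V) φs ≤ F φs := le_ciSup (hbdd φs) v
      have h4 : Metric.infDist (v : V) (Ws : Set V) ^ 2 ≤ F φs := le_trans (hfactb v) h3
      calc Metric.infDist (v : V) (Ws : Set V)
          = Real.sqrt (Metric.infDist (v : V) (Ws : Set V) ^ 2) :=
            (Real.sqrt_sq Metric.infDist_nonneg).symm
        _ ≤ Real.sqrt (F φs) := Real.sqrt_le_sqrt h4
    have hB : F φs ≤ F φ := hmin φ hφK
    have hC : F φ ≤ (⨆ v : M, Metric.infDist (v : V) (W' : Set V)) ^ 2 := by
      refine ciSup_le fun v => ?_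
      have h4 := hφle (v : V)
      have h5 : Metric.infDist (v : V) (W' : Set V)
          ≤ ⨆ v : M, Metric.infDist (v : V) (W' : Set V) := le_ciSup (hbddS W') v
      nlinarith [Metric.infDist_nonneg (x := (v : V)) (s := (W' : Set V)), h4, h5]
    calc (⨆ v : M, Metric.infDist (v : V) (Ws : Set V)) ≤ Real.sqrt (F φs) := hA
      _ ≤ Real.sqrt (F φ) := Real.sqrt_le_sqrt hB
      _ ≤ Real.sqrt ((⨆ v : M, Metric.infDist (v : V) (W' : Set V)) ^ 2) :=
          Real.sqrt_le_sqrt hC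
      _ = ⨆ v : M, Metric.infDist (v : V) (W' : Set V) := Real.sqrt_sq (hSnn W')
  clear_value Ws u K F g
  unfold kolmogorovWidth
  apply le_antisymm
  · haveI : Nonempty {W : Submodule ℝ V // FiniteDimensional ℝ W ∧ finrank ℝ W ≤ N} :=
      ⟨⟨⊥, inferInstance, by simp⟩⟩
    exact le_ciInf fun W => final W.1 W.2.1 W.2.2
  · have hb : BddBelow (Set.range fun W : {W : Submodule ℝ V // FiniteDimensional ℝ W ∧
        Module.finrank ℝ W ≤ N} =>
        ⨆ v : M, Metric.infDist (v : V) ((W : Submodule ℝ V) : Set V)) := by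
      refine ⟨0, ?_⟩
      rintro y ⟨W, rfl⟩
      exact hSnn W.1
    exact ciInf_le hb ⟨Ws, hfin, hrank⟩
end
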